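/- Let p be an odd prime, r ≥ 1, R = ℤ/p^rℤ, H the unique subgroup of R^× of order e | p−1, ζ a primitive p^r-th root of unity, and K the fixed field of H acting on ℚ(ζ) (so [ℚ(ζ):K] = e). For a nonzero orbit x = Hx₀, define the Gaussian period f_x = Σ_{h ∈ H} ζ^{h x₀}. Then for a nonzero orbit x with ord_p(x) < r−1 (i.e. its reduction mod p^{r-1} is a nonzero orbit), Tr_{K/ℚ}(f_x · conj(f_x)) = p^r − p^{r-1}. -/

import Mathlib

set_option maxHeartbeats 1000000
set_option synthInstance.maxHeartbeats 200000

section Helpers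


open Finset in
lemma pow_mod_eq' {M : Type*} [Monoid M] {z : M} {n : ℕ} (h : z ^ n = 1) (m : ℕ) :
    z ^ (m % n) = z ^ m := by
  conv_rhs => rw [← Nat.div_add_mod m n]
  rw [pow_add, pow_mul, h, one_pow, one_mul]

open Finset in
lemma geomSumZMod {n : ℕ} [NeZero n] {R : Type*} [Field R] {ξ : R}
    (hξ : IsPrimitiveRoot ξ n) (m : ℕ) (hm : (m : ZMod n) ≠ 0) :
    ∑ s : ZMod n, (ξ ^ m) ^ (s.val) = 0 := by
  have hzn : (ξ ^ m) ^ n = 1 := by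
    rw [← pow_mul, mul_comm, pow_mul, hξ.pow_eq_one, one_pow]
  have hz1 : ξ ^ m ≠ 1 := by
    intro h
    exact hm ((ZMod.natCast_eq_zero_iff m n).mpr (hξ.dvd_of_pow_eq_one m h))
  have hre : ∑ s : ZMod n, (ξ ^ m) ^ (s.val) = ∑ i ∈ range n, (ξ ^ m) ^ i := by
    refine Finset.sum_nbij' (fun s => s.val) (fun i => (i : ZMod n)) ?_ ?_ ?_ ?_ ?_
    · intro a _; exact mem_range.mpr (ZMod.val_lt a)
    · intro a _; exact mem_univ _
    · intro a _; simp [ZMod.natCast_val, ZMod.cast_id]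
    · intro a ha; exact ZMod.val_cast_of_lt (mem_range.mp ha)
    · intro a _; rfl
  rw [hre]
  have := geom_sum_mul (ξ ^ m) n
  rw [hzn, sub_self] at this
  rcases mul_eq_zero.mp this with h | h
  · exact h
  · exact absurd (sub_eq_zero.mp h) hz1

open Finset in
lemma unitsSum_eq_zero {p r : ℕ} [NeZero (p ^ r)] (hp : p.Prime) (hr2 : 2 ≤ r) {ζ : ℂ}
    (hζ : IsPrimitiveRoot ζ (p ^ r)) {b : ZMod (p ^ r)}
    (hb : ((b.val : ZMod (p ^ (r - 1)))) ≠ 0) :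
    ∑ t : (ZMod (p ^ r))ˣ, ζ ^ (((t : ZMod (p ^ r)) * b).val) = 0 := by
  classical
  haveI : NeZero (p ^ r) := ⟨pow_ne_zero _ hp.ne_zero⟩
  haveI : NeZero (p ^ (r - 1)) := ⟨pow_ne_zero _ hp.ne_zero⟩
  have hterm : ∀ x : ZMod (p ^ r), ζ ^ ((x * b).val) = (ζ ^ b.val) ^ x.val := by
    intro x
    rw [ZMod.val_mul, pow_mod_eq' hζ.pow_eq_one, mul_comm, pow_mul]
  have hbne : b ≠ 0 := by
    intro h; apply hb; rw [h, ZMod.val_zero, Nat.cast_zero]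
  have hb0 : ((b.val : ZMod (p ^ r))) ≠ 0 := by
    simpa [ZMod.natCast_val, ZMod.cast_id] using hbne
  -- the full sum is zero
  have hall : ∑ x : ZMod (p ^ r), (ζ ^ b.val) ^ x.val = 0 := geomSumZMod hζ b.val hb0
  -- split into units and non-units
  rw [← Finset.sum_filter_add_sum_filter_not Finset.univ (fun x : ZMod (p ^ r) => IsUnit x)
    (fun x => (ζ ^ b.val) ^ x.val)] at hall
  -- units part equals our sum
  have hA : ∑ x ∈ Finset.univ.filter (fun x : ZMod (p ^ r) => IsUnit x), (ζ ^ b.val) ^ x.val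
      = ∑ t : (ZMod (p ^ r))ˣ, ζ ^ (((t : ZMod (p ^ r)) * b).val) := by
    rw [Finset.sum_congr rfl (fun x _ => rfl)]
    refine (Finset.sum_bij (fun (t : (ZMod (p ^ r))ˣ) _ => (t : ZMod (p ^ r))) ?_ ?_ ?_ ?_).symm
    · intro t _; simp [Finset.mem_filter, t.isUnit]
    · intro t _ t' _ h; exact Units.ext h
    · intro x hx
      obtain ⟨u, hu⟩ := (Finset.mem_filter.mp hx).2
      exact ⟨u, Finset.mem_univ u, hu⟩
    · intro t _; exact hterm _
  -- non-units part
  have hB : ∑ x ∈ Finset.univ.filter (fun x : ZMod (p ^ r) => ¬ IsUnit x), (ζ ^ b.val) ^ x.val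
      = ∑ s : ZMod (p ^ (r - 1)), ((ζ ^ p) ^ b.val) ^ s.val := by
    have hlt : ∀ s : ZMod (p ^ (r - 1)), p * s.val < p ^ r := by
      intro s
      calc p * s.val < p * p ^ (r - 1) := mul_lt_mul_of_pos_left (ZMod.val_lt s) hp.pos
      _ = p ^ r := by
        rw [← pow_succ']
        congr 1
        omega
    refine (Finset.sum_bij
      (fun (s : ZMod (p ^ (r - 1))) _ => ((p * s.val : ℕ) : ZMod (p ^ r))) ?_ ?_ ?_ ?_).symm
    · intro s _
      rw [Finset.mem_filter]
      refine ⟨Finset.mem_univ _, ?_⟩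
      rw [ZMod.isUnit_iff_coprime]
      intro hc
      have : p ∣ 1 := hc ▸ Nat.dvd_gcd ⟨s.val, rfl⟩ ⟨p ^ (r - 1), by rw [← pow_succ']; congr 1; omega⟩
      exact hp.one_lt.ne' (Nat.dvd_one.mp this)
    · intro s _ s' _ h
      apply ZMod.val_injective
      have := congrArg ZMod.val h
      rwa [ZMod.val_cast_of_lt (hlt s), ZMod.val_cast_of_lt (hlt s'),
        Nat.mul_left_cancel_iff hp.pos] at this
    · intro x hx
      have hnu := (Finset.mem_filter.mp hx).2
      have hpdvd : p ∣ x.val := by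
        by_contra hnd
        apply hnu
        have : IsUnit ((x.val : ZMod (p ^ r))) := by
          rw [ZMod.isUnit_iff_coprime]
          exact (Nat.Coprime.pow_right _ ((Nat.Prime.coprime_iff_not_dvd hp).mpr hnd).symm)
        simpa [ZMod.natCast_val, ZMod.cast_id] using this
      obtain ⟨c, hc⟩ := hpdvd
      have hclt : c < p ^ (r - 1) := by
        have := ZMod.val_lt x
        rw [hc] at this
        have hpr : p ^ r = p * p ^ (r - 1) := by rw [← pow_succ']; congr 1; omega
        rw [hpr] at this
        exact lt_of_mul_lt_mul_left this (Nat.zero_le p)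
      refine ⟨(c : ZMod (p ^ (r - 1))), Finset.mem_univ _, ?_⟩
      show ((p * (ZMod.val ((c : ZMod (p ^ (r - 1))))) : ℕ) : ZMod (p ^ r)) = x
      rw [ZMod.val_cast_of_lt hclt, ← hc]
      simp [ZMod.natCast_val, ZMod.cast_id]
    · intro s _
      rw [ZMod.val_cast_of_lt (hlt s), ← pow_mul, ← pow_mul]
      ring_nf
  rw [hA, hB] at hall
  -- second part is zero by geometric sum at level p^(r-1)
  have hξ : IsPrimitiveRoot (ζ ^ p) (p ^ (r - 1)) := by
    refine hζ.pow (Nat.pos_of_ne_zero (pow_ne_zero _ hp.ne_zero)) ?_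
    rw [← pow_succ']; congr 1; omega
  rw [geomSumZMod hξ b.val hb, add_zero] at hall
  exact hall


lemma H_inj_mod_p {p r e : ℕ} [NeZero (p ^ r)] (hp : p.Prime) (hr : 1 ≤ r) (he : 0 < e)
    (hdvd : e ∣ p - 1) (H : Subgroup (ZMod (p ^ r))ˣ) (hH : Nat.card H = e)
    (h h' : H) (hne : h ≠ h')
    (hd : p ∣ p ^ r) :
    ZMod.unitsMap hd (h : (ZMod (p ^ r))ˣ) ≠ ZMod.unitsMap hd (h' : (ZMod (p ^ r))ˣ) := by
  intro heq
  haveI : NeZero p := ⟨hp.ne_zero⟩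
  apply hne
  set um := ZMod.unitsMap hd with hum
  set u : (ZMod (p ^ r))ˣ := (h : (ZMod (p ^ r))ˣ) * (h' : (ZMod (p ^ r))ˣ)⁻¹ with hu
  have hker : u ∈ um.ker := by
    rw [MonoidHom.mem_ker, hu, map_mul, map_inv, heq, mul_inv_cancel]
  -- cardinality of the kernel is p^(r-1)
  have hsurj : Function.Surjective um := ZMod.unitsMap_surjective hd
  have hquot := QuotientGroup.quotientKerEquivOfSurjective um hsurj
  have hcards := Subgroup.card_eq_card_quotient_mul_card_subgroup um.ker
  have hcardG : Nat.card (ZMod (p ^ r))ˣ = p ^ (r - 1) * (p - 1) := by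
    rw [Nat.card_eq_fintype_card, ZMod.card_units_eq_totient, Nat.totient_prime_pow hp hr]
  have hcardQ : Nat.card ((ZMod (p ^ r))ˣ ⧸ um.ker) = p - 1 := by
    rw [Nat.card_congr hquot.toEquiv, Nat.card_eq_fintype_card, ZMod.card_units_eq_totient,
      Nat.totient_prime hp]
  have hcardK : Nat.card um.ker = p ^ (r - 1) := by
    rw [hcardG, hcardQ] at hcards
    have hp1 : 0 < p - 1 := by have := hp.two_le; omega
    have h2 : (p - 1) * Nat.card um.ker = (p - 1) * p ^ (r - 1) := by
      rw [← hcards]; ring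
    exact (Nat.eq_of_mul_eq_mul_left hp1 h2)
  -- u has order dividing both e and p^(r-1)
  have hue : u ^ e = 1 := by
    have : ((h * h'⁻¹ : H) : (ZMod (p ^ r))ˣ) ^ e = 1 := by
      rw [← Subgroup.coe_pow, ← hH, pow_card_eq_one', Subgroup.coe_one]
    simpa [hu] using this
  have hup : u ^ (p ^ (r - 1)) = 1 := by
    have : ((⟨u, hker⟩ : um.ker) : (ZMod (p ^ r))ˣ) ^ (p ^ (r - 1)) = 1 := by
      rw [← Subgroup.coe_pow, ← hcardK, pow_card_eq_one', Subgroup.coe_one]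
    simpa using this
  have hcop : Nat.Coprime (p ^ (r - 1)) e := by
    have hnpe : ¬ p ∣ e := by
      intro hpe
      have : p ∣ p - 1 := hpe.trans hdvd
      have := Nat.le_of_dvd (by have := hp.two_le; omega) this
      have := hp.two_le; omega
    exact (Nat.Coprime.pow_left _ ((hp.coprime_iff_not_dvd).mpr hnpe)).coprime_dvd_right
      (dvd_refl e)
  have hu1 : u = 1 := by
    have h1 := orderOf_dvd_of_pow_eq_one hue
    have h2 := orderOf_dvd_of_pow_eq_one hup
    have := Nat.dvd_gcd h2 h1
    rw [Nat.Coprime.gcd_eq_one hcop] at this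
    rwa [Nat.dvd_one, orderOf_eq_one_iff] at this
  have : (h : (ZMod (p ^ r))ˣ) = (h' : (ZMod (p ^ r))ˣ) := by
    rwa [hu, mul_inv_eq_one] at hu1
  exact Subtype.ext this

lemma offdiag_ne_zero {p r e : ℕ} [NeZero (p ^ r)] [NeZero (p ^ (r - 1))] (hp : p.Prime)
    (hr : 1 ≤ r) (hr2 : 2 ≤ r) (he : 0 < e)
    (hdvd : e ∣ p - 1) (H : Subgroup (ZMod (p ^ r))ˣ) (hH : Nat.card H = e)
    (x₀ : ZMod (p ^ r))
    (hx₀ : ZMod.castHom (pow_dvd_pow p (Nat.sub_le r 1)) (ZMod (p ^ (r - 1))) x₀ ≠ 0)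
    (h h' : H) (hne : h ≠ h') :
    (((((h : (ZMod (p ^ r))ˣ) : ZMod (p ^ r)) - ((h' : (ZMod (p ^ r))ˣ) : ZMod (p ^ r))) * x₀).val
      : ZMod (p ^ (r - 1))) ≠ 0 := by
  have hdp : p ∣ p ^ r := dvd_pow_self p (by omega)
  have hdp1 : p ∣ p ^ (r - 1) := dvd_pow_self p (by omega)
  have hd1 : p ^ (r - 1) ∣ p ^ r := pow_dvd_pow p (Nat.sub_le r 1)
  set c := ZMod.castHom hd1 (ZMod (p ^ (r - 1))) with hc
  set d : ZMod (p ^ r) := ((h : (ZMod (p ^ r))ˣ) : ZMod (p ^ r))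
    - ((h' : (ZMod (p ^ r))ˣ) : ZMod (p ^ r)) with hdd
  have hcast : ((( d * x₀).val : ZMod (p ^ (r - 1)))) = c (d * x₀) := by
    rw [ZMod.natCast_val, ZMod.castHom_apply]
  rw [hcast, map_mul]
  -- c d is a unit
  have hmodp : ZMod.castHom hdp (ZMod p) d ≠ 0 := by
    have := H_inj_mod_p hp hr he hdvd H hH h h' hne hdp
    rw [Ne, ZMod.unitsMap, ← Units.val_inj] at this
    simp only [Units.coe_map, MonoidHom.coe_coe] at this
    rw [map_sub]
    intro h0
    exact this (by rw [sub_eq_zero] at h0; exact h0)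
  have hunit : IsUnit (c d) := by
    have hcomp : ZMod.castHom hdp1 (ZMod p) (c d) = ZMod.castHom hdp (ZMod p) d := by
      rw [hc, ← RingHom.comp_apply, ZMod.castHom_comp]
    have hnd : ¬ p ∣ (c d).val := by
      intro hdvd'
      apply hmodp
      rw [← hcomp, ZMod.castHom_apply, ← ZMod.natCast_val, ZMod.natCast_eq_zero_iff]
      exact hdvd'
    have : IsUnit (((c d).val : ZMod (p ^ (r - 1)))) := by
      rw [ZMod.isUnit_iff_coprime]
      exact Nat.Coprime.pow_right _ ((hp.coprime_iff_not_dvd).mpr hnd).symm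
    simpa [ZMod.natCast_val, ZMod.cast_id] using this
  intro h0
  apply hx₀
  have : c x₀ = 0 := by
    obtain ⟨v, hv⟩ := hunit
    rw [← hv] at h0
    exact (Units.mul_right_eq_zero v).mp h0
  rw [show ZMod.castHom (pow_dvd_pow p (Nat.sub_le r 1)) (ZMod (p ^ (r - 1))) x₀ = c x₀ from rfl]
  exact this

end Helpers

/-- The Gaussian period `f_{Hx} = Σ_{h ∈ H} ζ^(h·x)` attached to the orbit of `x`
under a subgroup `H` of `(ℤ/mℤ)ˣ`. -/
noncomputable def gaussPeriod {m : ℕ} (ζ : ℂ) (H : Subgroup (ZMod m)ˣ) (x : ZMod m) : ℂ :=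
  ∑ᶠ h : H, ζ ^ (((h : (ZMod m)ˣ) : ZMod m) * x).val

/-- `K` is the fixed field of `H` acting on `ℚ(ζ)` by `σ_h(ζ) = ζ^h`: an element
`z ∈ ℂ` lies in `K` iff `z ∈ ℚ(ζ)` and `z` is fixed by every `ℚ`-automorphism `σ`
of `ℚ(ζ)` sending `ζ` to `ζ^h` for some `h ∈ H`. -/
def IsHFixedField {m : ℕ} (ζ : ℂ) (H : Subgroup (ZMod m)ˣ)
    (K : IntermediateField ℚ ℂ) : Prop :=
  ∀ z : ℂ, z ∈ K ↔ ∃ hz : z ∈ IntermediateField.adjoin ℚ ({ζ} : Set ℂ),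
    ∀ σ : (IntermediateField.adjoin ℚ ({ζ} : Set ℂ)) ≃ₐ[ℚ]
        (IntermediateField.adjoin ℚ ({ζ} : Set ℂ)),
      (∃ h : H, (σ ⟨ζ, IntermediateField.subset_adjoin ℚ {ζ} rfl⟩ : ℂ) =
          ζ ^ (((h : (ZMod m)ˣ) : ZMod m)).val) →
      (σ ⟨z, hz⟩ : ℂ) = z

/-- with `K = ℚ(ζ)^H` of index `e = |H|` in `ℚ(ζ_{p^r})`, and
`f_x = Σ_{h∈H} ζ^(h x₀)` the Gaussian period of a nonzero orbit `x = Hx₀` with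
`ord_p(x) < r−1` (i.e. the reduction of `x₀` mod `p^(r−1)` is nonzero),
`Tr_{K/ℚ}(f_x · conj(f_x)) = p^r − p^(r−1)`. -/
theorem stmt4 (p r e : ℕ) (hp : p.Prime) (hodd : Odd p) (hr : 1 ≤ r)
    (he : 0 < e) (hdvd : e ∣ p - 1)
    (ζ : ℂ) (hζ : IsPrimitiveRoot ζ (p ^ r))
    (H : Subgroup (ZMod (p ^ r))ˣ) (hH : Nat.card H = e)
    (K : IntermediateField ℚ ℂ) (hK : IsHFixedField ζ H K)
    (x₀ : ZMod (p ^ r)) (hx₀ne : x₀ ≠ 0)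
    (hx₀ : ZMod.castHom (pow_dvd_pow p (Nat.sub_le r 1)) (ZMod (p ^ (r - 1))) x₀ ≠ 0)
    (w : K)
    (hw : (w : ℂ) = gaussPeriod ζ H x₀ * (starRingEnd ℂ) (gaussPeriod ζ H x₀)) :
    Algebra.trace ℚ K w = (p : ℚ) ^ r - (p : ℚ) ^ (r - 1) := by
  classical
  haveI : NeZero (p ^ r) := ⟨pow_ne_zero _ hp.ne_zero⟩
  haveI : NeZero (p ^ (r - 1)) := ⟨pow_ne_zero _ hp.ne_zero⟩
  have hr2 : 2 ≤ r := by
    by_contra hlt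
    have hone : p ^ (r - 1) = 1 := by
      have : r - 1 = 0 := by omega
      rw [this, pow_zero]
    haveI : Subsingleton (ZMod (p ^ (r - 1))) := by rw [hone]; infer_instance
    exact hx₀ (Subsingleton.elim _ _)
  -- the cyclotomic field L = ℚ(ζ)
  set L : IntermediateField ℚ ℂ := IntermediateField.adjoin ℚ ({ζ} : Set ℂ) with hLdef
  have hζmem : ζ ∈ L := IntermediateField.subset_adjoin ℚ {ζ} rfl
  set ζ' : L := ⟨ζ, IntermediateField.subset_adjoin ℚ {ζ} rfl⟩ with hζ'def
  have hζ' : IsPrimitiveRoot ζ' (p ^ r) := IsPrimitiveRoot.coe_submonoidClass_iff.mp hζ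
  set N : ℕ+ := ⟨p ^ r, pow_pos hp.pos r⟩ with hNdef
  have hζN : IsPrimitiveRoot ζ ((N : ℕ)) := hζ
  have hint : IsIntegral ℚ ζ := by
    refine ⟨Polynomial.X ^ (p ^ r) - 1, ?_, ?_⟩
    · simpa using Polynomial.monic_X_pow_sub_C (1 : ℚ) (pow_ne_zero r hp.ne_zero)
    · simp [hζ.pow_eq_one]
  have halg : L.toSubalgebra = Algebra.adjoin ℚ ({ζ} : Set ℂ) :=
    IntermediateField.adjoin_simple_toSubalgebra_of_isAlgebraic hint.isAlgebraic
  haveI hcycA : IsCyclotomicExtension {(N : ℕ)} ℚ (Algebra.adjoin ℚ ({ζ} : Set ℂ)) :=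
    hζN.adjoin_isCyclotomicExtension ℚ
  haveI hcyc : IsCyclotomicExtension {(N : ℕ)} ℚ L :=
    IsCyclotomicExtension.equiv (S := {(N : ℕ)}) (A := ℚ) _ (Subalgebra.equivOfEq _ _ halg.symm)
  haveI : FiniteDimensional ℚ L := IsCyclotomicExtension.finiteDimensional {(N : ℕ)} ℚ L
  haveI : IsGalois ℚ L := IsCyclotomicExtension.isGalois (S := {(N : ℕ)}) (K := ℚ) (L := L)
  have hirr : Irreducible (Polynomial.cyclotomic ((N : ℕ)) ℚ) :=
    Polynomial.cyclotomic.irreducible_rat N.pos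
  -- the Galois-action-to-power map
  set θ : (L ≃ₐ[ℚ] L) →* (ZMod (p ^ r))ˣ := hζ'.autToPow ℚ with hθdef
  have hspec : ∀ σ : L ≃ₐ[ℚ] L, ζ' ^ ((θ σ : ZMod (p ^ r))).val = σ ζ' := fun σ =>
    hζ'.autToPow_spec ℚ σ
  have hinj : Function.Injective θ :=
    IsPrimitiveRoot.autToPow_injective (n := (N : ℕ)) (K := ℚ) (hμ := hζ')
  have hcard : Fintype.card (L ≃ₐ[ℚ] L) = Fintype.card (ZMod (p ^ r))ˣ := by
    rw [← Nat.card_eq_fintype_card, IsGalois.card_aut_eq_finrank, ZMod.card_units_eq_totient,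
      IsCyclotomicExtension.finrank (n := (N : ℕ)) L hirr]
    rfl
  have hbij : Function.Bijective θ :=
    (Fintype.bijective_iff_injective_and_card θ).mpr ⟨hinj, hcard⟩
  set Eθ : (L ≃ₐ[ℚ] L) ≃ (ZMod (p ^ r))ˣ := Equiv.ofBijective θ hbij with hEθdef
  set H' : Subgroup (L ≃ₐ[ℚ] L) := H.comap θ with hH'def
  -- cardinality of H'
  have heqv : H' ≃ H :=
    { toFun := fun g => ⟨θ g.1, g.2⟩
      invFun := fun h => ⟨Eθ.symm h.1, Subgroup.mem_comap.mpr (by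
        rw [show θ (Eθ.symm h.1) = h.1 from Eθ.apply_symm_apply h.1]; exact h.2)⟩
      left_inv := fun g => Subtype.ext (Eθ.symm_apply_apply g.1)
      right_inv := fun h => Subtype.ext (Eθ.apply_symm_apply h.1) }
  have hrank : Module.finrank ↥(IntermediateField.fixedField H') ↥L = e := by
    rw [IntermediateField.finrank_fixedField_eq_card,
      Nat.card_congr heqv, hH]
  have hmemF : ∀ x : L, x ∈ IntermediateField.fixedField H' ↔
      ∀ g : H', (g : L ≃ₐ[ℚ] L) x = x := fun x => Iff.rfl
  -- the condition in hK is equivalent to membership in H'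
  have hcond : ∀ σ : L ≃ₐ[ℚ] L,
      (∃ h : H, (σ ⟨ζ, IntermediateField.subset_adjoin ℚ {ζ} rfl⟩ : ℂ) =
        ζ ^ (((h : (ZMod (p ^ r))ˣ) : ZMod (p ^ r))).val) ↔ σ ∈ H' := by
    intro σ
    constructor
    · rintro ⟨h, hσ⟩
      have h1 : ((σ ζ' : L) : ℂ) = ζ ^ ((θ σ : ZMod (p ^ r))).val := by
        rw [← hspec σ]; push_cast [hζ'def]; rfl
      have h2 : ζ ^ ((θ σ : ZMod (p ^ r))).val =
          ζ ^ (((h : (ZMod (p ^ r))ˣ) : ZMod (p ^ r))).val := by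
        rw [← h1, ← hσ]
      have h3 := hζ.pow_inj (ZMod.val_lt _) (ZMod.val_lt _) h2
      have h4 : (θ σ : ZMod (p ^ r)) = ((h : (ZMod (p ^ r))ˣ) : ZMod (p ^ r)) :=
        ZMod.val_injective _ h3
      have h5 : θ σ = (h : (ZMod (p ^ r))ˣ) := Units.ext h4
      rw [hH'def, Subgroup.mem_comap, h5]
      exact h.2
    · intro hσ
      refine ⟨⟨θ σ, hσ⟩, ?_⟩
      have h1 : ((σ ζ' : L) : ℂ) = ζ ^ ((θ σ : ZMod (p ^ r))).val := by
        rw [← hspec σ]; push_cast [hζ'def]; rfl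
      exact h1
  -- K is the image of the fixed field in ℂ
  have hKF : K = (IntermediateField.fixedField H').map L.val := by
    ext z
    rw [hK z]
    constructor
    · rintro ⟨hz, hfix⟩
      have hmem : (⟨z, hz⟩ : L) ∈ IntermediateField.fixedField H' := by
        rw [hmemF]
        intro g
        have := hfix (g : L ≃ₐ[ℚ] L) ((hcond _).mpr g.2)
        exact Subtype.ext this
      exact ⟨⟨z, hz⟩, hmem, rfl⟩
    · rintro ⟨yy, hyF, rfl⟩
      refine ⟨yy.2, ?_⟩
      intro σ hcondσ
      have hσH' : σ ∈ H' := (hcond σ).mp hcondσ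
      have h2 : σ yy = yy := (hmemF yy).mp hyF ⟨σ, hσH'⟩
      calc (σ ⟨(L.val yy : ℂ), yy.2⟩ : ℂ) = ((σ yy : L) : ℂ) := rfl
      _ = (yy : ℂ) := by rw [h2]
  -- the element of the fixed field corresponding to w
  obtain ⟨hwL, hwfix⟩ := (hK (w : ℂ)).mp w.2
  set wl : L := ⟨(w : ℂ), hwL⟩ with hwldef
  have hwlF : wl ∈ IntermediateField.fixedField H' := by
    rw [hmemF]
    intro g
    exact Subtype.ext (hwfix (g : L ≃ₐ[ℚ] L) ((hcond _).mpr g.2))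
  set y : ↥(IntermediateField.fixedField H') := ⟨wl, hwlF⟩ with hydef
  -- transfer the trace from K to the fixed field
  set E2 : ↥(IntermediateField.fixedField H') ≃ₐ[ℚ] K :=
    (IntermediateField.equivMap (IntermediateField.fixedField H') L.val).trans
      (IntermediateField.equivOfEq hKF.symm) with hE2def
  have hE2y : E2 y = w := by
    apply Subtype.ext
    show ((E2 y : K) : ℂ) = (w : ℂ)
    rfl
  have htr1 : Algebra.trace ℚ K w = Algebra.trace ℚ ↥(IntermediateField.fixedField H') y := by
    rw [← hE2y, Algebra.trace_eq_of_algEquiv E2 y]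
  -- tower: trace over L
  have htower : Algebra.trace ℚ L wl
      = e • Algebra.trace ℚ ↥(IntermediateField.fixedField H') y := by
    have h0 : algebraMap ↥(IntermediateField.fixedField H') ↥L y = wl := rfl
    calc Algebra.trace ℚ L wl
        = Algebra.trace ℚ L (algebraMap ↥(IntermediateField.fixedField H') ↥L y) := by rw [h0]
    _ = Algebra.trace ℚ ↥(IntermediateField.fixedField H')
          (Algebra.trace ↥(IntermediateField.fixedField H') ↥L
            (algebraMap ↥(IntermediateField.fixedField H') ↥L y)) :=
      (Algebra.trace_trace (S := ↥(IntermediateField.fixedField H')) _).symm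
    _ = Algebra.trace ℚ ↥(IntermediateField.fixedField H')
          ((Module.finrank ↥(IntermediateField.fixedField H') ↥L) • y) := by
      rw [Algebra.trace_algebraMap]
    _ = e • Algebra.trace ℚ ↥(IntermediateField.fixedField H') y := by rw [hrank, map_nsmul]
  -- now the analytic computation of the trace over L
  haveI hfinH : Fintype H := Fintype.ofFinite H
  have hζ1 : ζ ^ (p ^ r) = 1 := hζ.pow_eq_one
  have hmul : ∀ a b : ZMod (p ^ r), ζ ^ a.val * ζ ^ b.val = ζ ^ ((a + b).val) := by
    intro a b
    rw [ZMod.val_add, pow_mod_eq' hζ1, pow_add]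
  have hconj : ∀ a : ZMod (p ^ r), (starRingEnd ℂ) (ζ ^ a.val) = ζ ^ ((-a).val) := by
    intro a
    have h1 : ζ ^ a.val * ζ ^ ((-a).val) = 1 := by
      rw [hmul, add_neg_cancel, ZMod.val_zero, pow_zero]
    have habs : ‖ζ‖ = 1 :=
      Complex.norm_eq_one_of_pow_eq_one hζ1 (pow_ne_zero r hp.ne_zero)
    have h2 : (starRingEnd ℂ) (ζ ^ a.val) * ζ ^ a.val = 1 := by
      rw [← Complex.normSq_eq_conj_mul_self]
      rw [← Complex.sq_norm, norm_pow, habs]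
      norm_num
    calc (starRingEnd ℂ) (ζ ^ a.val)
        = (starRingEnd ℂ) (ζ ^ a.val) * (ζ ^ a.val * ζ ^ ((-a).val)) := by rw [h1, mul_one]
    _ = ((starRingEnd ℂ) (ζ ^ a.val) * ζ ^ a.val) * ζ ^ ((-a).val) := by ring
    _ = ζ ^ ((-a).val) := by rw [h2, one_mul]
  have hf : gaussPeriod ζ H x₀
      = ∑ h : H, ζ ^ ((((h : (ZMod (p ^ r))ˣ) : ZMod (p ^ r)) * x₀).val) :=
    finsum_eq_sum_of_fintype _
  have hwc : (w : ℂ) = ∑ h : H, ∑ h' : H,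
      ζ ^ ((((((h : (ZMod (p ^ r))ˣ) : ZMod (p ^ r))
        - ((h' : (ZMod (p ^ r))ˣ) : ZMod (p ^ r))) * x₀)).val) := by
    rw [hw, hf, map_sum, Finset.sum_mul]
    refine Finset.sum_congr rfl fun h _ => ?_
    rw [Finset.mul_sum]
    refine Finset.sum_congr rfl fun h' _ => ?_
    rw [hconj, hmul]
    congr 2
    ring
  -- trace over L as a sum over automorphisms
  have hsum : algebraMap ℚ ℂ (Algebra.trace ℚ L wl) = ∑ σ : L ≃ₐ[ℚ] L, ((σ wl : L) : ℂ) := by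
    have h1 := trace_eq_sum_automorphisms (K := ℚ) wl
    have h2 := congrArg (algebraMap L ℂ) h1
    rw [map_sum] at h2
    rw [IsScalarTower.algebraMap_apply ℚ L ℂ]
    exact h2
  -- wl as a double sum inside L
  have hwl2 : wl = ∑ h : H, ∑ h' : H,
      ζ' ^ ((((((h : (ZMod (p ^ r))ˣ) : ZMod (p ^ r))
        - ((h' : (ZMod (p ^ r))ˣ) : ZMod (p ^ r))) * x₀)).val) := by
    apply Subtype.ext
    push_cast
    exact hwc
  -- the action of each automorphism
  have hσwl : ∀ σ : L ≃ₐ[ℚ] L, ((σ wl : L) : ℂ) = ∑ h : H, ∑ h' : H,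
      ζ ^ ((((θ σ : ZMod (p ^ r))) * (((((h : (ZMod (p ^ r))ˣ) : ZMod (p ^ r))
        - ((h' : (ZMod (p ^ r))ˣ) : ZMod (p ^ r))) * x₀))).val) := by
    intro σ
    rw [hwl2]
    rw [map_sum]
    push_cast
    refine Finset.sum_congr rfl fun h _ => ?_
    rw [map_sum]
    push_cast
    refine Finset.sum_congr rfl fun h' _ => ?_
    rw [map_pow, ← hspec σ, ← pow_mul]
    push_cast
    conv_rhs => rw [ZMod.val_mul]
    rw [pow_mod_eq' hζ1]
  -- the double counting
  have hHcard : Fintype.card H = e := by rw [← Nat.card_eq_fintype_card, hH]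
  have hC : ((Fintype.card (ZMod (p ^ r))ˣ : ℂ)) = (p : ℂ) ^ r - (p : ℂ) ^ (r - 1) := by
    rw [ZMod.card_units_eq_totient, Nat.totient_prime_pow hp (by omega : 0 < r)]
    have h1 : ((p - 1 : ℕ) : ℂ) = (p : ℂ) - 1 := by
      have := hp.one_le
      push_cast [Nat.cast_sub this]
      ring
    push_cast [h1]
    have h2 : (p : ℂ) ^ (r - 1) * (p : ℂ) = (p : ℂ) ^ r := by
      rw [← pow_succ]
      congr 1
      omega
    calc (p : ℂ) ^ (r - 1) * ((p : ℂ) - 1)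
        = (p : ℂ) ^ (r - 1) * (p : ℂ) - (p : ℂ) ^ (r - 1) := by ring
    _ = (p : ℂ) ^ r - (p : ℂ) ^ (r - 1) := by rw [h2]
  have hbig : ∑ σ : L ≃ₐ[ℚ] L, ((σ wl : L) : ℂ)
      = (e : ℂ) * ((p : ℂ) ^ r - (p : ℂ) ^ (r - 1)) := by
    rw [Finset.sum_congr rfl fun σ _ => hσwl σ]
    rw [Finset.sum_comm]
    have hinner : ∀ h : H, ∑ σ : L ≃ₐ[ℚ] L, ∑ h' : H,
        ζ ^ ((((θ σ : ZMod (p ^ r))) * (((((h : (ZMod (p ^ r))ˣ) : ZMod (p ^ r))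
          - ((h' : (ZMod (p ^ r))ˣ) : ZMod (p ^ r))) * x₀))).val)
        = ((p : ℂ) ^ r - (p : ℂ) ^ (r - 1)) := by
      intro h
      rw [Finset.sum_comm]
      have hterm : ∀ h' : H, ∑ σ : L ≃ₐ[ℚ] L,
          ζ ^ ((((θ σ : ZMod (p ^ r))) * (((((h : (ZMod (p ^ r))ˣ) : ZMod (p ^ r))
            - ((h' : (ZMod (p ^ r))ˣ) : ZMod (p ^ r))) * x₀))).val)
          = if h' = h then ((p : ℂ) ^ r - (p : ℂ) ^ (r - 1)) else 0 := by
        intro h'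
        have hre : ∑ σ : L ≃ₐ[ℚ] L,
            ζ ^ ((((θ σ : ZMod (p ^ r))) * (((((h : (ZMod (p ^ r))ˣ) : ZMod (p ^ r))
              - ((h' : (ZMod (p ^ r))ˣ) : ZMod (p ^ r))) * x₀))).val)
            = ∑ t : (ZMod (p ^ r))ˣ,
            ζ ^ ((((t : ZMod (p ^ r))) * (((((h : (ZMod (p ^ r))ˣ) : ZMod (p ^ r))
              - ((h' : (ZMod (p ^ r))ˣ) : ZMod (p ^ r))) * x₀))).val) :=
          Fintype.sum_bijective θ hbij _ _ (fun σ => rfl)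
        rw [hre]
        by_cases hcase : h' = h
        · subst hcase
          simp only [sub_self, zero_mul, mul_zero, ZMod.val_zero, pow_zero,
            eq_self_iff_true, if_true]
          rw [Finset.sum_const, Finset.card_univ, nsmul_eq_mul, mul_one]
          exact hC
        · rw [if_neg hcase]
          exact unitsSum_eq_zero hp hr2 hζ
            (offdiag_ne_zero hp hr hr2 he hdvd H hH x₀ hx₀ h h' (fun hh => hcase (hh.symm)))
      rw [Finset.sum_congr rfl fun h' _ => hterm h']
      simp
    rw [Finset.sum_congr rfl fun h _ => hinner h]
    rw [Finset.sum_const, Finset.card_univ, hHcard, nsmul_eq_mul]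
  -- final assembly
  have hfin : algebraMap ℚ ℂ (Algebra.trace ℚ ↥(IntermediateField.fixedField H') y)
      = (p : ℂ) ^ r - (p : ℂ) ^ (r - 1) := by
    have h1 : algebraMap ℚ ℂ (Algebra.trace ℚ L wl)
        = (e : ℂ) * ((p : ℂ) ^ r - (p : ℂ) ^ (r - 1)) := hsum.trans hbig
    rw [htower, map_nsmul, nsmul_eq_mul] at h1
    have he' : (e : ℂ) ≠ 0 := Nat.cast_ne_zero.mpr he.ne'
    exact mul_left_cancel₀ he' h1
  have hQ : algebraMap ℚ ℂ ((p : ℚ) ^ r - (p : ℚ) ^ (r - 1))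
      = (p : ℂ) ^ r - (p : ℂ) ^ (r - 1) := by
    push_cast
    ring
  rw [htr1]
  exact (algebraMap ℚ ℂ).injective (hfin.trans hQ.symm)
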